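/- Let G be a hole-free and diamond-free graph and A an induced subgraph of G isomorphic to the complement of C6. Then no vertex outside A is adjacent to all six vertices of A. -/

import Mathlib

open SimpleGraph

/-- `H` occurs as an induced subgraph of `G`. -/
def HasInducedCopy {V W : Type} (G : SimpleGraph V) (H : SimpleGraph W) : Prop :=
  Nonempty (H ↪g G)

/-- `G` has no induced chordless cycle with at least 5 vertices. -/
def HoleFree {V : Type} (G : SimpleGraph V) : Prop :=
  ∀ n : ℕ, 5 ≤ n → ¬ HasInducedCopy G (cycleGraph n)

/-- the disjoint union of a `P₂` and a `P₃`. -/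
def p2p3 : SimpleGraph (Fin 5) :=
  SimpleGraph.fromRel (fun i j => (i, j) ∈ ([(0,1),(2,3),(3,4)] : List (Fin 5 × Fin 5)))

/-- the paraglider: a diamond on `0,1,2,3` (missing edge `2-3`) plus vertex `4` seeing `2,3`. -/
def paraglider : SimpleGraph (Fin 5) :=
  SimpleGraph.fromRel
    (fun i j => (i, j) ∈ ([(0,1),(0,2),(0,3),(1,2),(1,3),(4,2),(4,3)] : List (Fin 5 × Fin 5)))

/-- the diamond `K₄ - e`. -/
def diamond : SimpleGraph (Fin 4) :=
  SimpleGraph.fromRel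
    (fun i j => (i, j) ∈ ([(0,1),(0,2),(0,3),(1,2),(1,3)] : List (Fin 4 × Fin 4)))

/-- three independent edges. -/
def threeK2 : SimpleGraph (Fin 6) :=
  SimpleGraph.fromRel (fun i j => (i, j) ∈ ([(0,1),(2,3),(4,5)] : List (Fin 6 × Fin 6)))

/-- the matched co-bipartite graph: two cliques of size `k` joined by a perfect matching. -/
def matchedCoBip (k : ℕ) : SimpleGraph (Fin k ⊕ Fin k) :=
  SimpleGraph.fromRel (fun x y =>
    (∃ i j, x = Sum.inl i ∧ y = Sum.inl j) ∨ (∃ i j, x = Sum.inr i ∧ y = Sum.inr j) ∨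
    (∃ i, x = Sum.inl i ∧ y = Sum.inr i))

/-- `G` has no induced hole and no induced antihole. -/
def WeaklyChordal {V : Type} (G : SimpleGraph V) : Prop :=
  ∀ n : ℕ, 5 ≤ n →
    ¬ HasInducedCopy G (cycleGraph n) ∧ ¬ HasInducedCopy G (cycleGraph n)ᶜ

/-- a clique `K` whose removal disconnects the graph. -/
def HasCliqueSeparator {V : Type} (G : SimpleGraph V) : Prop :=
  ∃ K : Set V, G.IsClique K ∧ ¬ (G.induce Kᶜ).Preconnected

/-- an atom: a connected graph with no clique separator. -/
def IsAtomGraph {V : Type} (G : SimpleGraph V) : Prop :=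
  G.Connected ∧ ¬ HasCliqueSeparator G

/-- in a hole- and diamond-free graph, no vertex outside an induced
`C₆`-complement `A` sees all six vertices of `A`. -/
theorem hd_free_A6_empty {V : Type} (G : SimpleGraph V)
    (hHole : HoleFree G) (hDiam : ¬ HasInducedCopy G diamond)
    (f : (cycleGraph 6)ᶜ ↪g G) :
    ¬ ∃ v : V, v ∉ Set.range ⇑f ∧ ∀ i : Fin 6, G.Adj v (f i) := by
  rintro ⟨v, hv, hadj⟩
  apply hDiam
  -- map diamond vertices: 0 ↦ v, 1 ↦ f 3, 2 ↦ f 0, 3 ↦ f 1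
  let m : Fin 4 → V := ![v, f 3, f 0, f 1]
  have hvne : ∀ j : Fin 6, v ≠ f j := by
    intro j h; exact hv ⟨j, h.symm⟩
  have hfadj : ∀ i j : Fin 6, (cycleGraph 6)ᶜ.Adj i j ↔ G.Adj (f i) (f j) :=
    fun i j => (f.map_adj_iff).symm
  have hfi : Function.Injective f := f.injective
  have h30 : G.Adj (f 3) (f 0) := (hfadj 3 0).mp (by decide)
  have h31 : G.Adj (f 3) (f 1) := (hfadj 3 1).mp (by decide)
  have h01 : ¬ G.Adj (f 0) (f 1) := fun h => absurd ((hfadj 0 1).mpr h) (by decide)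
  have h10 : ¬ G.Adj (f 1) (f 0) := fun h => h01 h.symm
  refine ⟨⟨⟨m, ?_⟩, ?_⟩⟩
  · intro a b hab
    fin_cases a <;> fin_cases b <;> simp only [m] at hab <;>
      first
        | rfl
        | exact absurd hab (hvne _)
        | exact absurd hab.symm (hvne _)
        | exact absurd (hfi hab) (by decide)
  · intro a b
    show G.Adj (m a) (m b) ↔ diamond.Adj a b
    fin_cases a <;> fin_cases b <;>
      simp only [m, Matrix.cons_val_zero, Matrix.cons_val_one, Matrix.head_cons,
        Matrix.cons_val_two, Matrix.tail_cons, Matrix.cons_val_three] <;>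
      simp [diamond, SimpleGraph.fromRel_adj, h30, h31, h30.symm, h31.symm, h01, h10,
        hadj 3, hadj 0, hadj 1, (hadj 3).symm, (hadj 0).symm, (hadj 1).symm,
        G.irrefl] <;>
      decide
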